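/- In the structure R₂, for every ordinal α: α ≤₁ α+1 if and only if α is a limit ordinal and for every ordinal β with β <₂ α the set {γ < α : β <₂ γ} is cofinal in α (that is, α is a proper supremum of <₂-successors of every <₂-predecessor of α). -/

import Mathlib

open Ordinal

noncomputable section

/-- The least epsilon number: the least fixed point of `ξ ↦ ω ^ ξ`. -/
def eps0 : Ordinal := sInf {ξ : Ordinal | Ordinal.omega0 ^ ξ = ξ}

namespace R2

/-- Terms of the language `{≤, ≤₁, ≤₂}`: existentially quantified variables,
universally quantified variables, and parameters (ordinal constants). -/
inductive Trm : Type 1 where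
  | evar : ℕ → Trm
  | avar : ℕ → Trm
  | cst  : Ordinal → Trm

def Trm.val (v w : ℕ → Ordinal) : Trm → Ordinal
  | .evar n => v n
  | .avar n => w n
  | .cst c  => c

/-- Quantifier-free formulas in the language `{≤, ≤₁, ≤₂}`. -/
inductive QF : Type 1 where
  | le  : Trm → Trm → QF
  | le1 : Trm → Trm → QF
  | le2 : Trm → Trm → QF
  | not : QF → QF
  | and : QF → QF → QF
  | or  : QF → QF → QF

def QF.eval (r1 r2 : Ordinal → Ordinal → Prop) (v w : ℕ → Ordinal) : QF → Prop
  | .le s t  => s.val v w ≤ t.val v w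
  | .le1 s t => r1 (s.val v w) (t.val v w)
  | .le2 s t => r2 (s.val v w) (t.val v w)
  | .not φ   => ¬ φ.eval r1 r2 v w
  | .and φ ψ => φ.eval r1 r2 v w ∧ ψ.eval r1 r2 v w
  | .or φ ψ  => φ.eval r1 r2 v w ∨ ψ.eval r1 r2 v w

def Trm.NoAvar : Trm → Prop
  | .avar _ => False
  | _ => True

def QF.NoAvar : QF → Prop
  | .le s t  => s.NoAvar ∧ t.NoAvar
  | .le1 s t => s.NoAvar ∧ t.NoAvar
  | .le2 s t => s.NoAvar ∧ t.NoAvar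
  | .not φ   => φ.NoAvar
  | .and φ ψ => φ.NoAvar ∧ ψ.NoAvar
  | .or φ ψ  => φ.NoAvar ∧ ψ.NoAvar

def Trm.CstBelow (δ : Ordinal) : Trm → Prop
  | .cst c => c < δ
  | _ => True

def QF.CstBelow (δ : Ordinal) : QF → Prop
  | .le s t  => s.CstBelow δ ∧ t.CstBelow δ
  | .le1 s t => s.CstBelow δ ∧ t.CstBelow δ
  | .le2 s t => s.CstBelow δ ∧ t.CstBelow δ
  | .not φ   => φ.CstBelow δ
  | .and φ ψ => φ.CstBelow δ ∧ ψ.CstBelow δ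
  | .or φ ψ  => φ.CstBelow δ ∧ ψ.CstBelow δ

/-- Satisfaction of a Σ₁-formula (an existential block in front of a
quantifier-free formula without universal variables) in the segment of
ordinals `< δ`, with the indicated interpretations of `≤₁` and `≤₂`. -/
def Sat1 (r1 r2 : Ordinal → Ordinal → Prop) (δ : Ordinal) (φ : QF) : Prop :=
  ∃ v : ℕ → Ordinal, (∀ n, v n < δ) ∧ φ.eval r1 r2 v v

/-- Satisfaction of a Σ₂-formula (a block of existential quantifiers followed
by a block of universal quantifiers in front of a quantifier-free formula) in
the segment of ordinals `< δ`. -/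
def Sat2 (r1 r2 : Ordinal → Ordinal → Prop) (δ : Ordinal) (φ : QF) : Prop :=
  ∃ v : ℕ → Ordinal, (∀ n, v n < δ) ∧
    ∀ w : ℕ → Ordinal, (∀ n, w n < δ) → φ.eval r1 r2 v w

/-- `(α; ≤, ≤₁, ≤₂)` is a Σ₁-elementary substructure of `(β; ≤, ≤₁, ≤₂)`:
Σ₁-sentences with parameters `< α` hold in `α` iff they hold in `β`. -/
def Sig1Elem (r1 r2 : Ordinal → Ordinal → Prop) (α β : Ordinal) : Prop :=
  ∀ φ : QF, φ.NoAvar → φ.CstBelow α → (Sat1 r1 r2 α φ ↔ Sat1 r1 r2 β φ)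

/-- `(α; ≤, ≤₁, ≤₂)` is a Σ₂-elementary substructure of `(β; ≤, ≤₁, ≤₂)`. -/
def Sig2Elem (r1 r2 : Ordinal → Ordinal → Prop) (α β : Ordinal) : Prop :=
  ∀ φ : QF, φ.CstBelow α → (Sat2 r1 r2 α φ ↔ Sat2 r1 r2 β φ)

/-- The simultaneous recursive (in `β`) definition of `α ≤₁ β` (`i = false`)
and `α ≤₂ β` (`i = true`): `α ≤ᵢ β` iff `α ≤ β` and `(α; ≤, ≤₁, ≤₂)` is a
Σᵢ-elementary substructure of `(β; ≤, ≤₁, ≤₂)`, where the relations `≤₁, ≤₂`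
are the restrictions to the segment below `β`, already defined by recursion. -/
noncomputable def leAux : Ordinal → Bool → Ordinal → Prop :=
  WellFounded.fix Ordinal.lt_wf fun β IH i α =>
    α ≤ β ∧
      (match i with
        | false => Sig1Elem
        | true  => Sig2Elem)
        (fun x y => ∃ h : y < β, IH y h false x)
        (fun x y => ∃ h : y < β, IH y h true x) α β

/-- `α ≤₁ β` in the structure `R₂`. -/
def le1 (α β : Ordinal) : Prop := leAux β false α

/-- `α ≤₂ β` in the structure `R₂`. -/
def le2 (α β : Ordinal) : Prop := leAux β true α

def lt1 (α β : Ordinal) : Prop := le1 α β ∧ α < β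

def lt2 (α β : Ordinal) : Prop := le2 α β ∧ α < β

/-- `h` is an isomorphism (w.r.t. `≤, ≤₁, ≤₂`) on the set `A`. -/
def IsoOn (h : Ordinal → Ordinal) (A : Set Ordinal) : Prop :=
  ∀ x ∈ A, ∀ y ∈ A,
    (x ≤ y ↔ h x ≤ h y) ∧ (le1 x y ↔ le1 (h x) (h y)) ∧ (le2 x y ↔ le2 (h x) (h y))

end R2

namespace R2

/-- The finite set of constants occurring in a term. -/
def Trm.csts : Trm → Finset Ordinal
  | .cst c => {c}
  | _ => ∅

/-- The finite set of constants occurring in a formula. -/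
def QF.csts : QF → Finset Ordinal
  | .le s t  => s.csts ∪ t.csts
  | .le1 s t => s.csts ∪ t.csts
  | .le2 s t => s.csts ∪ t.csts
  | .not φ   => φ.csts
  | .and φ ψ => φ.csts ∪ ψ.csts
  | .or φ ψ  => φ.csts ∪ ψ.csts

lemma Trm.cstBelow_iff {δ : Ordinal} (t : Trm) :
    t.CstBelow δ ↔ ∀ c ∈ t.csts, c < δ := by
  cases t <;> simp [Trm.CstBelow, Trm.csts]

lemma QF.cstBelow_iff {δ : Ordinal} (φ : QF) :
    φ.CstBelow δ ↔ ∀ c ∈ φ.csts, c < δ := by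
  induction φ with
  | le s t => simp [QF.CstBelow, QF.csts, Trm.cstBelow_iff]; aesop
  | le1 s t => simp [QF.CstBelow, QF.csts, Trm.cstBelow_iff]; aesop
  | le2 s t => simp [QF.CstBelow, QF.csts, Trm.cstBelow_iff]; aesop
  | not φ ih => simpa [QF.CstBelow, QF.csts]
  | and φ ψ ih1 ih2 => simp [QF.CstBelow, QF.csts, ih1, ih2]; aesop
  | or φ ψ ih1 ih2 => simp [QF.CstBelow, QF.csts, ih1, ih2]; aesop

lemma QF.cstBelow_mono {δ δ' : Ordinal} (h : δ ≤ δ') {φ : QF} (hφ : φ.CstBelow δ) :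
    φ.CstBelow δ' := by
  rw [QF.cstBelow_iff] at *
  exact fun c hc => lt_of_lt_of_le (hφ c hc) h

/-- Bound on variable indices occurring in a term. -/
def Trm.maxVar : Trm → ℕ
  | .evar n => n + 1
  | .avar n => n + 1
  | .cst _ => 0

def QF.maxVar : QF → ℕ
  | .le s t  => max s.maxVar t.maxVar
  | .le1 s t => max s.maxVar t.maxVar
  | .le2 s t => max s.maxVar t.maxVar
  | .not φ   => φ.maxVar
  | .and φ ψ => max φ.maxVar ψ.maxVar
  | .or φ ψ  => max φ.maxVar ψ.maxVar

lemma Trm.val_ext {v v' w w' : ℕ → Ordinal} {k : ℕ} (t : Trm) (ht : t.maxVar ≤ k)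
    (hv : ∀ n < k, v n = v' n) (hw : ∀ n < k, w n = w' n) :
    t.val v w = t.val v' w' := by
  cases t with
  | evar n => exact hv n (lt_of_lt_of_le (Nat.lt_succ_self n) ht)
  | avar n => exact hw n (lt_of_lt_of_le (Nat.lt_succ_self n) ht)
  | cst c => rfl

lemma QF.eval_ext {R1 R2 : Ordinal → Ordinal → Prop} {v v' w w' : ℕ → Ordinal} {k : ℕ}
    (φ : QF) (hφ : φ.maxVar ≤ k)
    (hv : ∀ n < k, v n = v' n) (hw : ∀ n < k, w n = w' n) :
    (φ.eval R1 R2 v w ↔ φ.eval R1 R2 v' w') := by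
  induction φ with
  | le s t =>
    simp only [QF.maxVar, max_le_iff] at hφ
    simp [QF.eval, Trm.val_ext s hφ.1 hv hw, Trm.val_ext t hφ.2 hv hw]
  | le1 s t =>
    simp only [QF.maxVar, max_le_iff] at hφ
    simp [QF.eval, Trm.val_ext s hφ.1 hv hw, Trm.val_ext t hφ.2 hv hw]
  | le2 s t =>
    simp only [QF.maxVar, max_le_iff] at hφ
    simp [QF.eval, Trm.val_ext s hφ.1 hv hw, Trm.val_ext t hφ.2 hv hw]
  | not φ ih => simp only [QF.maxVar] at hφ; simp [QF.eval, ih hφ]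
  | and φ ψ ih1 ih2 =>
    simp only [QF.maxVar, max_le_iff] at hφ
    simp [QF.eval, ih1 hφ.1, ih2 hφ.2]
  | or φ ψ ih1 ih2 =>
    simp only [QF.maxVar, max_le_iff] at hφ
    simp [QF.eval, ih1 hφ.1, ih2 hφ.2]

lemma Trm.noAvar_val {v w w' : ℕ → Ordinal} (t : Trm) (ht : t.NoAvar) :
    t.val v w = t.val v w' := by
  cases t <;> simp_all [Trm.NoAvar, Trm.val]

lemma QF.eval_noAvar {R1 R2 : Ordinal → Ordinal → Prop} {v w w' : ℕ → Ordinal}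
    (φ : QF) (hφ : φ.NoAvar) :
    (φ.eval R1 R2 v w ↔ φ.eval R1 R2 v w') := by
  induction φ with
  | le s t => simp [QF.eval, Trm.noAvar_val s hφ.1 (w' := w'), Trm.noAvar_val t hφ.2 (w' := w')]
  | le1 s t => simp [QF.eval, Trm.noAvar_val s hφ.1 (w' := w'), Trm.noAvar_val t hφ.2 (w' := w')]
  | le2 s t => simp [QF.eval, Trm.noAvar_val s hφ.1 (w' := w'), Trm.noAvar_val t hφ.2 (w' := w')]
  | not φ ih => simp [QF.eval, ih hφ]
  | and φ ψ ih1 ih2 => simp [QF.eval, ih1 hφ.1, ih2 hφ.2]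
  | or φ ψ ih1 ih2 => simp [QF.eval, ih1 hφ.1, ih2 hφ.2]

lemma Trm.val_congr {Q : Ordinal → Ordinal → Prop} {v w v' w' : ℕ → Ordinal}
    (Hv : ∀ n, Q (v n) (v' n)) (Hw : ∀ n, Q (w n) (w' n))
    (t : Trm) (hc : ∀ c ∈ t.csts, Q c c) :
    Q (t.val v w) (t.val v' w') := by
  cases t with
  | evar n => exact Hv n
  | avar n => exact Hw n
  | cst c => exact hc c (by simp [Trm.csts])

lemma QF.eval_congr {R1 R2 R1' R2' : Ordinal → Ordinal → Prop}
    {Q : Ordinal → Ordinal → Prop} {v w v' w' : ℕ → Ordinal}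
    (H : ∀ a a' b b', Q a a' → Q b b' →
      ((a ≤ b ↔ a' ≤ b') ∧ (R1 a b ↔ R1' a' b') ∧ (R2 a b ↔ R2' a' b')))
    (Hv : ∀ n, Q (v n) (v' n)) (Hw : ∀ n, Q (w n) (w' n))
    (φ : QF) (hc : ∀ c ∈ φ.csts, Q c c) :
    (φ.eval R1 R2 v w ↔ φ.eval R1' R2' v' w') := by
  induction φ with
  | le s t =>
    simp only [QF.csts, Finset.mem_union] at hc
    exact (H _ _ _ _ (Trm.val_congr Hv Hw s (fun c h => hc c (Or.inl h)))
      (Trm.val_congr Hv Hw t (fun c h => hc c (Or.inr h)))).1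
  | le1 s t =>
    simp only [QF.csts, Finset.mem_union] at hc
    exact (H _ _ _ _ (Trm.val_congr Hv Hw s (fun c h => hc c (Or.inl h)))
      (Trm.val_congr Hv Hw t (fun c h => hc c (Or.inr h)))).2.1
  | le2 s t =>
    simp only [QF.csts, Finset.mem_union] at hc
    exact (H _ _ _ _ (Trm.val_congr Hv Hw s (fun c h => hc c (Or.inl h)))
      (Trm.val_congr Hv Hw t (fun c h => hc c (Or.inr h)))).2.2
  | not φ ih => simp only [QF.eval]; rw [ih hc]
  | and φ ψ ih1 ih2 =>
    simp only [QF.csts, Finset.mem_union] at hc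
    simp only [QF.eval]
    rw [ih1 (fun c h => hc c (Or.inl h)), ih2 (fun c h => hc c (Or.inr h))]
  | or φ ψ ih1 ih2 =>
    simp only [QF.csts, Finset.mem_union] at hc
    simp only [QF.eval]
    rw [ih1 (fun c h => hc c (Or.inl h)), ih2 (fun c h => hc c (Or.inr h))]


lemma le1_def (α β : Ordinal) : le1 α β ↔ α ≤ β ∧
    Sig1Elem (fun x y => ∃ _ : y < β, le1 x y) (fun x y => ∃ _ : y < β, le2 x y) α β := by
  unfold le1 le2 leAux
  rw [WellFounded.fix_eq]

lemma le2_def (α β : Ordinal) : le2 α β ↔ α ≤ β ∧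
    Sig2Elem (fun x y => ∃ _ : y < β, le1 x y) (fun x y => ∃ _ : y < β, le2 x y) α β := by
  unfold le1 le2 leAux
  rw [WellFounded.fix_eq]

lemma sat1_congr {R1 R2 R1' R2' : Ordinal → Ordinal → Prop} {δ : Ordinal} {φ : QF}
    (H : ∀ a b, a < δ → b < δ → ((R1 a b ↔ R1' a b) ∧ (R2 a b ↔ R2' a b)))
    (hφ : φ.CstBelow δ) :
    Sat1 R1 R2 δ φ ↔ Sat1 R1' R2' δ φ := by
  rw [QF.cstBelow_iff] at hφ
  constructor <;> rintro ⟨v, hv, he⟩ <;> refine ⟨v, hv, ?_⟩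
  · exact (QF.eval_congr (Q := fun a b => a = b ∧ a < δ)
      (fun a a' b b' ha hb => by
        obtain ⟨rfl, ha⟩ := ha; obtain ⟨rfl, hb⟩ := hb
        exact ⟨Iff.rfl, (H a b ha hb).1, (H a b ha hb).2⟩)
      (fun n => ⟨rfl, hv n⟩) (fun n => ⟨rfl, hv n⟩) φ
      (fun c h => ⟨rfl, hφ c h⟩)).mp he
  · exact (QF.eval_congr (Q := fun a b => a = b ∧ a < δ)
      (fun a a' b b' ha hb => by
        obtain ⟨rfl, ha⟩ := ha; obtain ⟨rfl, hb⟩ := hb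
        exact ⟨Iff.rfl, (H a b ha hb).1, (H a b ha hb).2⟩)
      (fun n => ⟨rfl, hv n⟩) (fun n => ⟨rfl, hv n⟩) φ
      (fun c h => ⟨rfl, hφ c h⟩)).mpr he

lemma sat2_congr {R1 R2 R1' R2' : Ordinal → Ordinal → Prop} {δ : Ordinal} {φ : QF}
    (H : ∀ a b, a < δ → b < δ → ((R1 a b ↔ R1' a b) ∧ (R2 a b ↔ R2' a b)))
    (hφ : φ.CstBelow δ) :
    Sat2 R1 R2 δ φ ↔ Sat2 R1' R2' δ φ := by
  rw [QF.cstBelow_iff] at hφ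
  have key : ∀ (v w : ℕ → Ordinal), (∀ n, v n < δ) → (∀ n, w n < δ) →
      (φ.eval R1 R2 v w ↔ φ.eval R1' R2' v w) := fun v w hv hw =>
    QF.eval_congr (Q := fun a b => a = b ∧ a < δ)
      (fun a a' b b' ha hb => by
        obtain ⟨rfl, ha⟩ := ha; obtain ⟨rfl, hb⟩ := hb
        exact ⟨Iff.rfl, (H a b ha hb).1, (H a b ha hb).2⟩)
      (fun n => ⟨rfl, hv n⟩) (fun n => ⟨rfl, hw n⟩) φ
      (fun c h => ⟨rfl, hφ c h⟩)
  constructor <;> rintro ⟨v, hv, he⟩ <;> refine ⟨v, hv, fun w hw => ?_⟩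
  · exact (key v w hv hw).mp (he w hw)
  · exact (key v w hv hw).mpr (he w hw)

lemma le1_iff (α β : Ordinal) : le1 α β ↔ α ≤ β ∧
    ∀ φ : QF, φ.NoAvar → φ.CstBelow α → (Sat1 le1 le2 α φ ↔ Sat1 le1 le2 β φ) := by
  rw [le1_def]
  refine and_congr_right fun hαβ => ?_
  unfold Sig1Elem
  refine forall_congr' fun φ => ?_
  refine imp_congr_right fun hna => ?_
  refine imp_congr_right fun hc => ?_
  have H : ∀ a b : Ordinal, b < β →
      (((∃ _ : b < β, le1 a b) ↔ le1 a b) ∧ ((∃ _ : b < β, le2 a b) ↔ le2 a b)) :=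
    fun a b hb => ⟨⟨fun ⟨_, h⟩ => h, fun h => ⟨hb, h⟩⟩, ⟨fun ⟨_, h⟩ => h, fun h => ⟨hb, h⟩⟩⟩
  rw [sat1_congr (fun a b _ hb => H a b (lt_of_lt_of_le hb hαβ)) hc,
    sat1_congr (fun a b _ hb => H a b hb) (QF.cstBelow_mono hαβ hc)]

lemma le2_iff (α β : Ordinal) : le2 α β ↔ α ≤ β ∧
    ∀ φ : QF, φ.CstBelow α → (Sat2 le1 le2 α φ ↔ Sat2 le1 le2 β φ) := by
  rw [le2_def]
  refine and_congr_right fun hαβ => ?_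
  unfold Sig2Elem
  refine forall_congr' fun φ => ?_
  refine imp_congr_right fun hc => ?_
  have H : ∀ a b : Ordinal, b < β →
      (((∃ _ : b < β, le1 a b) ↔ le1 a b) ∧ ((∃ _ : b < β, le2 a b) ↔ le2 a b)) :=
    fun a b hb => ⟨⟨fun ⟨_, h⟩ => h, fun h => ⟨hb, h⟩⟩, ⟨fun ⟨_, h⟩ => h, fun h => ⟨hb, h⟩⟩⟩
  rw [sat2_congr (fun a b _ hb => H a b (lt_of_lt_of_le hb hαβ)) hc,
    sat2_congr (fun a b _ hb => H a b hb) (QF.cstBelow_mono hαβ hc)]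


lemma le1.le {α β : Ordinal} (h : le1 α β) : α ≤ β := ((le1_iff α β).mp h).1
lemma le2.le {α β : Ordinal} (h : le2 α β) : α ≤ β := ((le2_iff α β).mp h).1

lemma le1_refl (α : Ordinal) : le1 α α := (le1_iff α α).mpr ⟨le_rfl, fun _ _ _ => Iff.rfl⟩
lemma le2_refl (α : Ordinal) : le2 α α := (le2_iff α α).mpr ⟨le_rfl, fun _ _ => Iff.rfl⟩

lemma le1_trans {α β γ : Ordinal} (h1 : le1 α β) (h2 : le1 β γ) : le1 α γ := by
  rw [le1_iff] at *
  exact ⟨h1.1.trans h2.1, fun φ hna hc =>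
    (h1.2 φ hna hc).trans (h2.2 φ hna (QF.cstBelow_mono h1.1 hc))⟩

lemma le2_trans {α β γ : Ordinal} (h1 : le2 α β) (h2 : le2 β γ) : le2 α γ := by
  rw [le2_iff] at *
  exact ⟨h1.1.trans h2.1, fun φ hc =>
    (h1.2 φ hc).trans (h2.2 φ (QF.cstBelow_mono h1.1 hc))⟩

lemma sat1_mono {R1 R2 : Ordinal → Ordinal → Prop} {δ δ' : Ordinal} {φ : QF}
    (h : δ ≤ δ') (hs : Sat1 R1 R2 δ φ) : Sat1 R1 R2 δ' φ := by
  obtain ⟨v, hv, he⟩ := hs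
  exact ⟨v, fun n => lt_of_lt_of_le (hv n) h, he⟩

lemma sat1_iff_sat2 {R1 R2 : Ordinal → Ordinal → Prop} {δ : Ordinal} {φ : QF}
    (hna : φ.NoAvar) : Sat1 R1 R2 δ φ ↔ Sat2 R1 R2 δ φ := by
  constructor
  · rintro ⟨v, hv, he⟩
    exact ⟨v, hv, fun w hw => (QF.eval_noAvar φ hna).mp he⟩
  · rintro ⟨v, hv, he⟩
    exact ⟨v, hv, he v hv⟩

lemma le2_le1 {α β : Ordinal} (h : le2 α β) : le1 α β := by
  rw [le2_iff] at h
  rw [le1_iff]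
  exact ⟨h.1, fun φ hna hc =>
    (sat1_iff_sat2 hna).trans ((h.2 φ hc).trans (sat1_iff_sat2 hna).symm)⟩

lemma le1_interp {α β γ : Ordinal} (h : le1 α γ) (h1 : α ≤ β) (h2 : β ≤ γ) : le1 α β := by
  rw [le1_iff] at *
  refine ⟨h1, fun φ hna hc => ⟨fun hs => sat1_mono h1 hs, fun hs => (h.2 φ hna hc).mpr
    (sat1_mono h2 hs)⟩⟩

lemma le1_comparable {α β γ : Ordinal} (h1 : le1 α γ) (h2 : le1 β γ) (h : α ≤ β) :
    le1 α β := by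
  rw [le1_iff] at *
  exact ⟨h, fun φ hna hc =>
    ((h1.2 φ hna hc).trans ((h2.2 φ hna (QF.cstBelow_mono h hc)).symm))⟩

lemma le2_comparable {α β γ : Ordinal} (h1 : le2 α γ) (h2 : le2 β γ) (h : α ≤ β) :
    le2 α β := by
  rw [le2_iff] at *
  exact ⟨h, fun φ hc => ((h1.2 φ hc).trans ((h2.2 φ (QF.cstBelow_mono h hc)).symm))⟩


/-- Substitute constants for the existential variables. -/
def Trm.substE (v : ℕ → Ordinal) : Trm → Trm
  | .evar n => .cst (v n)
  | t => t

def QF.substE (v : ℕ → Ordinal) : QF → QF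
  | .le s t  => .le (s.substE v) (t.substE v)
  | .le1 s t => .le1 (s.substE v) (t.substE v)
  | .le2 s t => .le2 (s.substE v) (t.substE v)
  | .not φ   => .not (φ.substE v)
  | .and φ ψ => .and (φ.substE v) (ψ.substE v)
  | .or φ ψ  => .or (φ.substE v) (ψ.substE v)

lemma Trm.substE_val {v u w : ℕ → Ordinal} (t : Trm) :
    (t.substE v).val u w = t.val v w := by
  cases t <;> rfl

lemma QF.substE_eval {R1 R2 : Ordinal → Ordinal → Prop} {v u w : ℕ → Ordinal} (φ : QF) :
    (φ.substE v).eval R1 R2 u w ↔ φ.eval R1 R2 v w := by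
  induction φ <;> simp [QF.substE, QF.eval, Trm.substE_val, *]

lemma Trm.substE_cstBelow {δ : Ordinal} {v : ℕ → Ordinal} (t : Trm)
    (h : t.CstBelow δ) (hv : ∀ n, v n < δ) : (t.substE v).CstBelow δ := by
  cases t <;> simp_all [Trm.substE, Trm.CstBelow]

lemma QF.substE_cstBelow {δ : Ordinal} {v : ℕ → Ordinal} (φ : QF)
    (h : φ.CstBelow δ) (hv : ∀ n, v n < δ) : (φ.substE v).CstBelow δ := by
  induction φ <;>
    simp_all [QF.substE, QF.CstBelow, Trm.substE_cstBelow, fun t => Trm.substE_cstBelow t]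

/-- Truncation of an assignment to the variables below `k`. -/
def trunc (v : ℕ → Ordinal) (k : ℕ) : ℕ → Ordinal := fun n => if n < k then v n else 0

lemma trunc_lt {v : ℕ → Ordinal} {k : ℕ} {δ : Ordinal} (hδ : 0 < δ)
    (hv : ∀ n, v n < δ) : ∀ n, trunc v k n < δ := by
  intro n; unfold trunc; split <;> simp [hv n, hδ]

lemma trunc_sup_lt {v : ℕ → Ordinal} {k : ℕ} {δ : Ordinal} (hδ : 0 < δ)
    (hv : ∀ n, v n < δ) :
    ∃ b, b < δ ∧ ∀ n, trunc v k n ≤ b := by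
  refine ⟨(Finset.range k).sup v, ?_, ?_⟩
  · refine Finset.sup_lt_iff (by simpa using hδ) |>.mpr fun n _ => hv n
  · intro n
    unfold trunc
    split
    · exact Finset.le_sup (Finset.mem_range.mpr (by assumption))
    · exact zero_le

lemma eval_trunc {R1 R2 : Ordinal → Ordinal → Prop} {v w : ℕ → Ordinal} (φ : QF) :
    φ.eval R1 R2 (trunc v φ.maxVar) (trunc w φ.maxVar) ↔ φ.eval R1 R2 v w :=
  QF.eval_ext φ le_rfl (fun n hn => by simp [trunc, hn]) (fun n hn => by simp [trunc, hn])

/-- If `x` is `≤₁`-below cofinally many ordinals below a limit `α`, then `x ≤₁ α`. -/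
lemma lim1 {x α : Ordinal} (hα : Order.IsSuccLimit α) (hx : x < α)
    (hcof : ∀ η < α, ∃ γ, η < γ ∧ γ < α ∧ le1 x γ) : le1 x α := by
  rw [le1_iff]
  refine ⟨hx.le, fun φ hna hc => ⟨fun hs => sat1_mono hx.le hs, ?_⟩⟩
  rintro ⟨v, hv, he⟩
  obtain ⟨b, hb, hbv⟩ := trunc_sup_lt (k := φ.maxVar) hα.pos hv
  obtain ⟨γ, hγ1, hγ2, hγ3⟩ := hcof b hb
  have : Sat1 le1 le2 γ φ :=
    ⟨trunc v φ.maxVar, fun n => lt_of_le_of_lt (hbv n) hγ1, (eval_trunc φ).mpr he⟩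
  exact ((le1_iff x γ).mp hγ3).2 φ hna hc |>.mpr this

/-- If `x` is `≤₂`-below cofinally many ordinals below a limit `α`, then `x ≤₂ α`. -/
lemma lim2 {x α : Ordinal} (hα : Order.IsSuccLimit α) (hx : x < α)
    (hcof : ∀ η < α, ∃ γ, η < γ ∧ γ < α ∧ le2 x γ) : le2 x α := by
  rw [le2_iff]
  refine ⟨hx.le, fun φ hc => ?_⟩
  constructor
  · -- Sat2 x φ → Sat2 α φ
    rintro ⟨v, hv, he⟩
    have hx0 : 0 < x := lt_of_le_of_lt (zero_le) (hv 0)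
    refine ⟨v, fun n => lt_trans (hv n) hx, fun w hw => ?_⟩
    obtain ⟨b, hb, hbw⟩ := trunc_sup_lt (k := φ.maxVar) hα.pos hw
    obtain ⟨γ, hγ1, hγ2, hγ3⟩ := hcof (max b x) (max_lt hb hx)
    -- the substituted formula
    set ψ := φ.substE v with hψ
    have hψc : ψ.CstBelow x := QF.substE_cstBelow φ hc hv
    have hψsat : Sat2 le1 le2 x ψ :=
      ⟨v, hv, fun w' hw' => (QF.substE_eval φ).mpr (he w' hw')⟩
    have hψsat2 : Sat2 le1 le2 γ ψ := (((le2_iff x γ).mp hγ3).2 ψ hψc).mp hψsat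
    obtain ⟨u, hu, hue⟩ := hψsat2
    have hwγ : ∀ n, trunc w φ.maxVar n < γ :=
      fun n => lt_of_le_of_lt (hbw n) (lt_of_le_of_lt (le_max_left b x) hγ1)
    have := (QF.substE_eval (u := u) (w := trunc w φ.maxVar) φ).mp (hue _ hwγ)
    exact (QF.eval_ext φ le_rfl (fun n hn => rfl) (fun n hn => by simp [trunc, hn])).mp this
  · -- Sat2 α φ → Sat2 x φ
    rintro ⟨v, hv, he⟩
    obtain ⟨b, hb, hbv⟩ := trunc_sup_lt (k := φ.maxVar) hα.pos hv
    obtain ⟨γ, hγ1, hγ2, hγ3⟩ := hcof b hb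
    have hsatγ : Sat2 le1 le2 γ φ := by
      refine ⟨trunc v φ.maxVar, fun n => lt_of_le_of_lt (hbv n) hγ1, fun w hw => ?_⟩
      have := he w (fun n => lt_trans (hw n) hγ2)
      exact (QF.eval_ext φ le_rfl (fun n hn => by simp [trunc, hn]) (fun n hn => rfl)).mpr this
    exact (((le2_iff x γ).mp hγ3).2 φ hc).mpr hsatγ


lemma not_le1_bound {x α : Ordinal} (hα : Order.IsSuccLimit α) (hx : x < α) (h : ¬ le1 x α) :
    ∃ η, η < α ∧ ∀ γ, η < γ → γ < α → ¬ le1 x γ := by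
  by_contra hcon
  push_neg at hcon
  exact h (lim1 hα hx (fun η hη => by
    obtain ⟨γ, hγ1, hγ2, hγ3⟩ := hcon η hη
    exact ⟨γ, hγ1, hγ2, hγ3⟩))

lemma not_le2_bound {x α : Ordinal} (hα : Order.IsSuccLimit α) (hx : x < α) (h : ¬ le2 x α) :
    ∃ η, η < α ∧ ∀ γ, η < γ → γ < α → ¬ le2 x γ := by
  by_contra hcon
  push_neg at hcon
  exact h (lim2 hα hx (fun η hη => by
    obtain ⟨γ, hγ1, hγ2, hγ3⟩ := hcon η hη
    exact ⟨γ, hγ1, hγ2, hγ3⟩))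

/-- Selection of a substitute `γ < α` for `α` matching the `≤₁`/`≤₂` relations from the
finitely many relevant parameters. -/
lemma exists_gamma {α : Ordinal} (hα : Order.IsSuccLimit α)
    (hcof : ∀ β, lt2 β α → ∀ η < α, ∃ γ, η < γ ∧ γ < α ∧ lt2 β γ)
    (X : Finset Ordinal) (hX : ∀ x ∈ X, x < α) :
    ∃ γ, X.sup id < γ ∧ γ < α ∧
      ∀ x ∈ X, ((le1 x α ↔ le1 x γ) ∧ (le2 x α ↔ le2 x γ)) := by
  classical
  have key : ∀ x ∈ X, ∃ η, η < α ∧ ∀ γ, η < γ → γ < α →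
      (le1 x γ → le1 x α) ∧ (le2 x γ → le2 x α) := by
    intro x hx
    by_cases h1 : le1 x α
    · by_cases h2 : le2 x α
      · exact ⟨0, hα.pos, fun γ _ _ => ⟨fun _ => h1, fun _ => h2⟩⟩
      · obtain ⟨η, hη, hb⟩ := not_le2_bound hα (hX x hx) h2
        exact ⟨η, hη, fun γ hγ1 hγ2 => ⟨fun _ => h1, fun h => absurd h (hb γ hγ1 hγ2)⟩⟩
    · have h2 : ¬ le2 x α := fun h => h1 (le2_le1 h)
      obtain ⟨η1, hη1, hb1⟩ := not_le1_bound hα (hX x hx) h1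
      obtain ⟨η2, hη2, hb2⟩ := not_le2_bound hα (hX x hx) h2
      refine ⟨max η1 η2, max_lt hη1 hη2, fun γ hγ1 hγ2 => ?_⟩
      exact ⟨fun h => absurd h (hb1 γ (lt_of_le_of_lt (le_max_left _ _) hγ1) hγ2),
        fun h => absurd h (hb2 γ (lt_of_le_of_lt (le_max_right _ _) hγ1) hγ2)⟩
  choose! f hf1 hf2 using key
  set η₀ : Ordinal := (X.sup f) ⊔ (X.sup id) with hη₀
  have hη₀α : η₀ < α := by
    refine max_lt ?_ ?_
    · exact Finset.sup_lt_iff (by simpa using hα.pos) |>.mpr fun x hx => hf1 x hx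
    · exact Finset.sup_lt_iff (by simpa using hα.pos) |>.mpr fun x hx => hX x hx
  set X₂ : Finset Ordinal := X.filter (fun x => le2 x α) with hX₂
  have main : ∃ γ, η₀ < γ ∧ γ < α ∧ ∀ x ∈ X, le2 x α → le2 x γ := by
    rcases X₂.eq_empty_or_nonempty with hemp | hne
    · refine ⟨η₀ + 1, lt_add_one _, ?_, ?_⟩
      · have := hα.succ_lt hη₀α
        rwa [Order.succ_eq_add_one] at this
      · intro x hx h2
        exact (Finset.notMem_empty x (hemp ▸ Finset.mem_filter.mpr ⟨hx, h2⟩)).elim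
    · set x' : Ordinal := X₂.max' hne with hx'
      have hx'mem := X₂.max'_mem hne
      have hx'X : x' ∈ X := (Finset.mem_filter.mp hx'mem).1
      have hx'2 : le2 x' α := (Finset.mem_filter.mp hx'mem).2
      obtain ⟨γ, hγ1, hγ2, hγ3⟩ := hcof x' ⟨hx'2, hX x' hx'X⟩ η₀ hη₀α
      refine ⟨γ, hγ1, hγ2, fun x hx h2 => ?_⟩
      have hxX₂ : x ∈ X₂ := Finset.mem_filter.mpr ⟨hx, h2⟩
      have hxx' : x ≤ x' := Finset.le_max' _ _ hxX₂
      exact le2_trans (le2_comparable h2 hx'2 hxx') hγ3.1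
  obtain ⟨γ, hγ1, hγ2, hγ3⟩ := main
  have hsupγ : X.sup id < γ := lt_of_le_of_lt (le_max_right _ _) hγ1
  refine ⟨γ, hsupγ, hγ2, fun x hx => ?_⟩
  have hxγ : x ≤ γ := le_of_lt (lt_of_le_of_lt (Finset.le_sup (f := id) hx) hsupγ)
  have hfx : η₀ < γ := hγ1
  have hfx' : f x < γ := lt_of_le_of_lt (le_trans (Finset.le_sup hx) (le_max_left _ _)) hγ1
  constructor
  · exact ⟨fun h => le1_interp h hxγ hγ2.le, fun h => (hf2 x hx γ hfx' hγ2).1 h⟩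
  · exact ⟨fun h => hγ3 x hx h, fun h => (hf2 x hx γ hfx' hγ2).2 h⟩


lemma lt_add_one' (α : Ordinal) : α < α + 1 := by
  rw [Ordinal.add_one_eq_succ]; exact Order.lt_succ α

lemma le_of_lt_add_one {a α : Ordinal} (h : a < α + 1) : a ≤ α := by
  rwa [Ordinal.add_one_eq_succ, Order.lt_succ_iff] at h

end R2

namespace R2

theorem main (α : Ordinal) :
    R2.le1 α (α + 1) ↔
      Order.IsSuccLimit α ∧
        ∀ β : Ordinal, R2.lt2 β α →
          ∀ η < α, ∃ γ, η < γ ∧ γ < α ∧ R2.lt2 β γ := by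
  classical
  constructor
  · intro h
    rw [le1_iff] at h
    obtain ⟨-, h⟩ := h
    have hpos : 0 < α := by
      have h0 := (h (.le (.evar 0) (.evar 0)) ⟨trivial, trivial⟩ ⟨trivial, trivial⟩).mpr
        ⟨fun _ => 0, fun _ => lt_of_le_of_lt ((zero_le (a := α))) (lt_add_one' α), le_rfl⟩
      obtain ⟨v, hv, -⟩ := h0
      exact lt_of_le_of_lt (zero_le) (hv 0)
    have hlim : Order.IsSuccLimit α := by
      refine Ordinal.isSuccLimit_iff.mpr ⟨hpos.ne', Order.isSuccPrelimit_iff_succ_lt.mpr fun a ha => ?_⟩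
      have ha' := (h (.not (.le (.evar 0) (.cst a))) ⟨trivial, trivial⟩ ⟨trivial, ha⟩).mpr
        ⟨fun _ => α, fun _ => lt_add_one' α, by simp [QF.eval, Trm.val, not_le.mpr ha]⟩
      obtain ⟨v, hv, he⟩ := ha'
      simp only [QF.eval, Trm.val, not_le] at he
      exact lt_of_le_of_lt (Order.succ_le_of_lt he) (hv 0)
    refine ⟨hlim, fun β hβ η hη => ?_⟩
    have hβα : β < α := hβ.2
    have hsat := (h (.and (.and (.not (.le (.evar 0) (.cst η))) (.le2 (.cst β) (.evar 0)))
        (.not (.le (.evar 0) (.cst β))))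
        ⟨⟨⟨trivial, trivial⟩, ⟨trivial, trivial⟩⟩, ⟨trivial, trivial⟩⟩
        ⟨⟨⟨trivial, hη⟩, ⟨hβα, trivial⟩⟩, ⟨trivial, hβα⟩⟩).mpr
      ⟨fun _ => α, fun _ => lt_add_one' α, by
        simp only [QF.eval, Trm.val, not_le]
        exact ⟨⟨hη, hβ.1⟩, hβα⟩⟩
    obtain ⟨v, hv, he⟩ := hsat
    simp only [QF.eval, Trm.val, not_le] at he
    exact ⟨v 0, he.1.1, hv 0, he.1.2, he.2⟩
  · rintro ⟨hlim, hcof⟩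
    rw [le1_iff]
    refine ⟨(lt_add_one' α).le, fun φ hna hc => ⟨fun hs => sat1_mono (lt_add_one' α).le hs, ?_⟩⟩
    rintro ⟨v, hv, he⟩
    have hvle : ∀ n, v n ≤ α := fun n => le_of_lt_add_one (hv n)
    set N := φ.maxVar with hN
    set X : Finset Ordinal :=
      insert 0 ((((Finset.range N).image v).filter (· < α)) ∪ φ.csts) with hXdef
    have hXlt : ∀ x ∈ X, x < α := by
      intro x hx
      rw [hXdef, Finset.mem_insert, Finset.mem_union, Finset.mem_filter] at hx
      rcases hx with rfl | ⟨-, hx⟩ | hx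
      · exact hlim.pos
      · exact hx
      · exact (QF.cstBelow_iff φ).mp hc x hx
    obtain ⟨γ, hMγ, hγα, hiff⟩ := exists_gamma hlim hcof X hXlt
    have hXM : ∀ x ∈ X, x ≤ X.sup id := fun x hx => Finset.le_sup (f := id) hx
    set v'' : ℕ → Ordinal := fun n => if n < N then (if v n = α then γ else v n) else 0
      with hv''def
    have hv'' : ∀ n, v'' n < α := by
      intro n
      rw [hv''def]
      dsimp only
      split
      · split
        · exact hγα
        · exact lt_of_le_of_ne (hvle n) (by assumption)
      · exact hlim.pos
    set Q : Ordinal → Ordinal → Prop := fun a b => (a ∈ X ∧ b = a) ∨ (a = α ∧ b = γ)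
      with hQdef
    have Hv : ∀ n, Q (trunc v N n) (v'' n) := by
      intro n
      rw [hQdef, hv''def]
      dsimp only
      unfold trunc
      by_cases hn : n < N
      · simp only [hn, if_true]
        by_cases hvn : v n = α
        · exact Or.inr ⟨hvn, by simp [hvn]⟩
        · refine Or.inl ⟨?_, by simp [hvn]⟩
          rw [hXdef]
          refine Finset.mem_insert_of_mem (Finset.mem_union_left _ ?_)
          exact Finset.mem_filter.mpr ⟨Finset.mem_image.mpr ⟨n, Finset.mem_range.mpr hn, rfl⟩,
            lt_of_le_of_ne (hvle n) hvn⟩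
      · simp only [hn, if_false]
        exact Or.inl ⟨by rw [hXdef]; exact Finset.mem_insert_self _ _, by simp⟩
    have Hc : ∀ c ∈ φ.csts, Q c c := by
      intro c hcc
      refine Or.inl ⟨?_, rfl⟩
      rw [hXdef]
      exact Finset.mem_insert_of_mem (Finset.mem_union_right _ hcc)
    have H : ∀ a a' b b', Q a a' → Q b b' →
        ((a ≤ b ↔ a' ≤ b') ∧ (le1 a b ↔ le1 a' b') ∧ (le2 a b ↔ le2 a' b')) := by
      intro a a' b b' ha hb
      simp only [hQdef] at ha hb
      rcases ha with ⟨haX, ha'⟩ | ⟨ha1, ha2⟩ <;> rcases hb with ⟨hbX, hb'⟩ | ⟨hb1, hb2⟩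
      · rw [ha', hb']
        exact ⟨Iff.rfl, Iff.rfl, Iff.rfl⟩
      · rw [ha', hb1, hb2]
        have haM : a ≤ X.sup id := hXM a haX
        refine ⟨iff_of_true (hXlt a haX).le (haM.trans hMγ.le), ?_, ?_⟩
        · exact (hiff a haX).1
        · exact (hiff a haX).2
      · rw [ha1, ha2, hb']
        have hbM : b ≤ X.sup id := hXM b hbX
        have h1 : ¬ α ≤ b := not_le.mpr (hXlt b hbX)
        have h2 : ¬ γ ≤ b := not_le.mpr (lt_of_le_of_lt hbM hMγ)
        refine ⟨iff_of_false h1 h2, ?_, ?_⟩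
        · exact iff_of_false (fun hl => h1 hl.le) (fun hl => h2 hl.le)
        · exact iff_of_false (fun hl => h1 hl.le) (fun hl => h2 hl.le)
      · rw [ha1, ha2, hb1, hb2]
        exact ⟨iff_of_true le_rfl le_rfl, iff_of_true (le1_refl α) (le1_refl γ),
          iff_of_true (le2_refl α) (le2_refl γ)⟩
    have he2 : φ.eval le1 le2 (trunc v N) (trunc v N) := (eval_trunc φ).mpr he
    have he3 : φ.eval le1 le2 v'' v'' := (QF.eval_congr H Hv Hv φ Hc).mp he2
    exact ⟨v'', hv'', he3⟩

end R2
/-- In `R₂`: `α ≤₁ α+1` iff `α` is a limit ordinal and `α` is a proper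
supremum of `<₂`-successors of every `<₂`-predecessor of `α`. -/
theorem le1_succ_iff (α : Ordinal) :
    R2.le1 α (α + 1) ↔
      Order.IsSuccLimit α ∧
        ∀ β : Ordinal, R2.lt2 β α →
          ∀ η < α, ∃ γ, η < γ ∧ γ < α ∧ R2.lt2 β γ := by
  exact R2.main α

end
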